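/- In the formal power series ring ℚ[[t,x]] one has the identity log(1+x) · log((t;1+x)_∞) = ∑_{k≥0} (B_k/k!) · Li_{2−k}(t) · log(1+x)^k, where (t;1+x)_∞ is obtained from (t;q)_∞ by the substitution q = 1+x. Equivalently, with q = 1+x, log((t;q)_∞) = ∑_{k≥0} (B_k/k!) Li_{2−k}(t) log(1+x)^{k−1} as an identity in x^{−1}·ℚ[[t,x]]. -/

import Mathlib

/-!
STATEMENT 1: In `ℚ[[t,x]]`,
`log(1+x) · log((t;1+x)_∞) = ∑_{k ≥ 0} (B_k/k!) · Li_{2-k}(t) · log(1+x)^k`.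

Here `(t;1+x)_∞`, the expansion at `q = 1+x` of the infinite Pochhammer symbol
`(t;q)_∞ = ∏_{n≥0}(1-qⁿt)`, is characterised (in `ℚ((x))[[t]]`) as the unique power
series `F` with constant term `1` satisfying the functional equation
`F(t) = (1-t)·F((1+x)·t)` of the infinite product.
-/

/-- `log(1+x) = ∑_{j ≥ 1} (-1)^{j+1} x^j / j ∈ ℚ[[x]]`. -/
noncomputable def logOnePlusX : PowerSeries ℚ :=
  PowerSeries.mk fun j => if j = 0 then 0 else (-1 : ℚ) ^ (j + 1) / j

/-- The coefficient of `t^ℓ` in `Li_s(t) = ∑_{ℓ ≥ 1} ℓ^{-s} t^ℓ`. -/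
noncomputable def liCoeff (s : ℤ) (ℓ : ℕ) : ℚ :=
  if ℓ = 0 then 0 else (ℓ : ℚ) ^ (-s)

/-- The `k`-th term `(B_k/k!) · Li_{2-k}(t) · log(1+x)^k`, an element of `ℚ[[x]][[t]]`;
`B_k` are the Bernoulli numbers with `B_1 = -1/2`. -/
noncomputable def bernTerm (k : ℕ) : PowerSeries (PowerSeries ℚ) :=
  PowerSeries.mk fun ℓ =>
    ((bernoulli k / (k.factorial : ℚ)) * liCoeff (2 - (k : ℤ)) ℓ) • (logOnePlusX ^ k)

/-- `∑_{k ≥ 0} (B_k/k!) · Li_{2-k}(t) · log(1+x)^k ∈ ℚ[[t,x]]`, summed coefficientwise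
(in each bidegree only finitely many `k` contribute, since `log(1+x)^k = O(x^k)`). -/
noncomputable def bernSum : PowerSeries (PowerSeries ℚ) :=
  PowerSeries.mk fun ℓ => PowerSeries.mk fun i =>
    ∑ᶠ k : ℕ, PowerSeries.coeff (R := ℚ) i (PowerSeries.coeff (R := (PowerSeries ℚ)) ℓ (bernTerm k))

/-- The formal logarithm `log F = ∑_{k ≥ 1} (-1)^{k+1} (F-1)^k / k` of a power series
(with constant term `1`) over a field, defined coefficientwise. -/
noncomputable def plog {K : Type*} [Field K] (F : PowerSeries K) : PowerSeries K :=
  PowerSeries.mk fun b => ∑ k ∈ Finset.Icc 1 b,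
    ((-1 : K) ^ (k + 1) / k) * PowerSeries.coeff (R := K) b ((F - 1) ^ k)

/-- `x` as a Laurent series in `ℚ((x))`. -/
noncomputable def xL : LaurentSeries ℚ := HahnSeries.single 1 1

/-! ### Auxiliary development -/

open PowerSeries Finset

section Generic

lemma coeff_pow_eq_zero' {R : Type*} [CommRing R] {u : PowerSeries R}
    (hu : constantCoeff (R := R) u = 0) {k n : ℕ} (h : n < k) :
    coeff (R := R) n (u ^ k) = 0 := by
  have hdvd : (X : PowerSeries R) ^ k ∣ u ^ k :=
    pow_dvd_pow_of_dvd (X_dvd_iff.mpr hu) k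
  exact (X_pow_dvd_iff.mp hdvd) n h

end Generic

section PSubst

/-- Bare-hands substitution `f(a)` for `a` with zero constant term. -/
noncomputable def pSubst (a f : PowerSeries ℚ) : PowerSeries ℚ :=
  PowerSeries.mk fun i => ∑ k ∈ range (i + 1), coeff (R := ℚ) k f * coeff (R := ℚ) i (a ^ k)

lemma coeff_pSubst (a f : PowerSeries ℚ) (i : ℕ) :
    coeff (R := ℚ) i (pSubst a f) = ∑ k ∈ range (i + 1), coeff (R := ℚ) k f * coeff (R := ℚ) i (a ^ k) :=
  coeff_mk _ _

variable {a : PowerSeries ℚ} (ha : constantCoeff (R := ℚ) a = 0)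

include ha

lemma coeff_aeval (P : Polynomial ℚ) (i : ℕ) :
    coeff (R := ℚ) i (Polynomial.aeval a P) = ∑ k ∈ range (i + 1), P.coeff k * coeff (R := ℚ) i (a ^ k) := by
  have h1 : (Polynomial.aeval a) P
      = ∑ k ∈ range (max (P.natDegree + 1) (i + 1)), P.coeff k • a ^ k :=
    Polynomial.aeval_eq_sum_range' (lt_of_lt_of_le (Nat.lt_succ_self _) (le_max_left _ _)) a
  rw [h1, map_sum]
  rw [show (∑ k ∈ range (max (P.natDegree + 1) (i + 1)), coeff (R := ℚ) i (P.coeff k • a ^ k))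
      = ∑ k ∈ range (i + 1), coeff (R := ℚ) i (P.coeff k • a ^ k) from
    (Finset.sum_subset (Finset.range_subset_range.mpr (le_max_right _ _))
      (fun k _ hk' => by
        have hik : i < k := by simp only [mem_range] at hk'; omega
        simp [coeff_pow_eq_zero' ha hik])).symm]
  exact Finset.sum_congr rfl fun k _ => by simp [smul_eq_mul]

lemma coeff_pSubst_eq_aeval (f : PowerSeries ℚ) {i N : ℕ} (hiN : i < N) :
    coeff (R := ℚ) i (pSubst a f) = coeff (R := ℚ) i (Polynomial.aeval a (trunc N f)) := by
  rw [coeff_pSubst, coeff_aeval ha]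
  refine Finset.sum_congr rfl fun k hk => ?_
  rw [coeff_trunc]
  simp only [mem_range] at hk
  rw [if_pos (by omega)]

lemma pSubst_mul (f g : PowerSeries ℚ) :
    pSubst a (f * g) = pSubst a f * pSubst a g := by
  ext i
  rw [coeff_pSubst_eq_aeval ha (f * g) (Nat.lt_succ_self i), PowerSeries.coeff_mul]
  have h2 : ∑ p ∈ antidiagonal i, coeff (R := ℚ) p.1 (pSubst a f) * coeff (R := ℚ) p.2 (pSubst a g)
      = coeff (R := ℚ) i ((Polynomial.aeval a (trunc (i + 1) f) : PowerSeries ℚ)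
          * Polynomial.aeval a (trunc (i + 1) g)) := by
    rw [PowerSeries.coeff_mul]
    refine Finset.sum_congr rfl fun p hp => ?_
    have hpi : p.1 + p.2 = i := Finset.HasAntidiagonal.mem_antidiagonal.mp hp
    rw [coeff_pSubst_eq_aeval ha f (show p.1 < i + 1 by omega),
        coeff_pSubst_eq_aeval ha g (show p.2 < i + 1 by omega)]
  rw [h2, ← map_mul]
  rw [coeff_aeval ha, coeff_aeval ha]
  refine Finset.sum_congr rfl fun k hk => ?_
  have hki : k < i + 1 := mem_range.mp hk
  congr 1
  rw [coeff_trunc, if_pos hki, Polynomial.coeff_mul, PowerSeries.coeff_mul]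
  refine Finset.sum_congr rfl fun p hp => ?_
  have hpk : p.1 + p.2 = k := Finset.HasAntidiagonal.mem_antidiagonal.mp hp
  rw [coeff_trunc, if_pos (by omega), coeff_trunc, if_pos (by omega)]

omit ha in
lemma pSubst_one : pSubst a 1 = 1 := by
  ext i
  rw [coeff_pSubst, Finset.sum_eq_single 0]
  · simp
  · intro k _ hk
    simp [PowerSeries.coeff_one, hk]
  · intro h
    exact absurd (Finset.mem_range.mpr (Nat.succ_pos i)) h

lemma pSubst_pow (f : PowerSeries ℚ) (n : ℕ) :
    pSubst a (f ^ n) = (pSubst a f) ^ n := by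
  induction n with
  | zero => simpa using pSubst_one
  | succ m ih => rw [pow_succ, pow_succ, pSubst_mul ha, ih]

omit ha in
lemma pSubst_smul (c : ℚ) (f : PowerSeries ℚ) :
    pSubst a (c • f) = c • pSubst a f := by
  ext i
  simp only [coeff_pSubst, map_smul, smul_eq_mul, Finset.mul_sum]
  exact Finset.sum_congr rfl fun k _ => by ring

omit ha in
lemma pSubst_sub (f g : PowerSeries ℚ) :
    pSubst a (f - g) = pSubst a f - pSubst a g := by
  ext i
  simp only [coeff_pSubst, map_sub, sub_mul, Finset.sum_sub_distrib]

lemma pSubst_X : pSubst a X = a := by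
  ext i
  rw [coeff_pSubst, Finset.sum_eq_single 1]
  · simp
  · intro k _ hk
    simp [PowerSeries.coeff_X, hk]
  · intro h
    simp only [mem_range, not_lt] at h
    have hi : i = 0 := by omega
    subst hi
    rw [pow_one, coeff_zero_eq_constantCoeff_apply, ha, mul_zero]

end PSubst

section LFacts

lemma L_const0 : constantCoeff (R := ℚ) logOnePlusX = 0 := by
  rw [← coeff_zero_eq_constantCoeff_apply, logOnePlusX, coeff_mk, if_pos rfl]

lemma coeff_L_one : coeff (R := ℚ) 1 logOnePlusX = 1 := by
  rw [logOnePlusX, coeff_mk]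
  norm_num

lemma coeff_dL (n : ℕ) : coeff (R := ℚ) n (PowerSeries.derivative ℚ logOnePlusX) = (-1) ^ n := by
  rw [PowerSeries.coeff_derivative, logOnePlusX, coeff_mk, if_neg (Nat.succ_ne_zero n)]
  have hn : ((n : ℚ) + 1) ≠ 0 := by positivity
  push_cast
  field_simp
  ring

lemma one_add_X_mul_dL : (1 + X) * PowerSeries.derivative ℚ logOnePlusX = 1 := by
  ext n
  rw [add_mul, one_mul, map_add]
  cases n with
  | zero => rw [coeff_zero_X_mul, coeff_dL]; simp
  | succ m =>
      rw [coeff_succ_X_mul, coeff_dL, coeff_dL]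
      simp [pow_succ]

/-- Uniqueness for the ODE `(1+x) f' = f`, `f(0)=1`. -/
lemma ode_sol {f : PowerSeries ℚ} (h0 : constantCoeff (R := ℚ) f = 1)
    (hf : (1 + X) * PowerSeries.derivative ℚ f = f) : f = 1 + X := by
  have hrec : ∀ n : ℕ, coeff (R := ℚ) (n + 1) f * ((n : ℚ) + 1) + coeff (R := ℚ) n f * (n : ℚ)
      = coeff (R := ℚ) n f := by
    intro n
    have h := congrArg (coeff (R := ℚ) n) hf
    rw [add_mul, one_mul, map_add] at h
    cases n with
    | zero =>
        rw [coeff_zero_X_mul, PowerSeries.coeff_derivative] at h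
        push_cast at h ⊢
        linarith
    | succ m =>
        rw [coeff_succ_X_mul, PowerSeries.coeff_derivative, PowerSeries.coeff_derivative] at h
        push_cast at h ⊢
        linarith
  have h0' : coeff (R := ℚ) 0 f = 1 := by rw [coeff_zero_eq_constantCoeff_apply, h0]
  have h1 : coeff (R := ℚ) 1 f = 1 := by have := hrec 0; push_cast at this; linarith [h0']
  have h2 : ∀ m : ℕ, coeff (R := ℚ) (m + 2) f = 0 := by
    intro m
    induction m with
    | zero =>
        have := hrec 1
        rw [h1] at this
        push_cast at this
        linarith
    | succ k ih =>
        have := hrec (k + 2)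
        rw [ih] at this
        have hk : ((k : ℚ) + 2 + 1) ≠ 0 := by positivity
        push_cast at this
        have : coeff (R := ℚ) (k + 3) f * ((k : ℚ) + 2 + 1) = 0 := by linarith
        exact (mul_eq_zero.mp this).resolve_right hk
  ext n
  match n with
  | 0 => simpa [PowerSeries.coeff_one, PowerSeries.coeff_X] using h0'
  | 1 => simpa [PowerSeries.coeff_one, PowerSeries.coeff_X] using h1
  | (m + 2) => simpa [PowerSeries.coeff_one, PowerSeries.coeff_X] using h2 m

end LFacts

section ExpL

lemma coeff_exp' (n : ℕ) : coeff (R := ℚ) n (exp ℚ) = 1 / n.factorial := by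
  simp [PowerSeries.coeff_exp]

/-- Chain rule for the specific composite `exp ∘ logOnePlusX`. -/
lemma deriv_pSubst_exp :
    PowerSeries.derivative ℚ (pSubst logOnePlusX (exp ℚ))
      = pSubst logOnePlusX (exp ℚ) * PowerSeries.derivative ℚ logOnePlusX := by
  set L := logOnePlusX with hLdef
  set dL := PowerSeries.derivative ℚ L with hdL
  ext n
  have key : ∀ k : ℕ, coeff (R := ℚ) (n + 1) (L ^ k) * ((n : ℚ) + 1)
      = (k : ℚ) * coeff (R := ℚ) n (L ^ (k - 1) * dL) := by
    intro k
    have h : coeff (R := ℚ) n (PowerSeries.derivative ℚ (L ^ k))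
        = (k : ℚ) * coeff (R := ℚ) n (L ^ (k - 1) * dL) := by
      rw [show PowerSeries.derivative ℚ (L ^ k)
          = k • ((L ^ (k - 1)) • PowerSeries.derivative ℚ L) from Derivation.leibniz_pow _ _ _]
      rw [smul_eq_mul, map_nsmul, nsmul_eq_mul, ← hdL]
    have h2 := PowerSeries.coeff_derivative (L ^ k) n
    rw [h2] at h
    push_cast at h
    linarith [h]
  have hRHS : coeff (R := ℚ) n (pSubst L (exp ℚ) * dL)
      = ∑ k ∈ range (n + 1), coeff (R := ℚ) k (exp ℚ) * coeff (R := ℚ) n (L ^ k * dL) := by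
    rw [PowerSeries.coeff_mul, Finset.Nat.sum_antidiagonal_eq_sum_range_succ_mk]
    have hext : ∀ p ∈ range (n + 1), coeff (R := ℚ) p (pSubst L (exp ℚ)) * coeff (R := ℚ) (n - p) dL
        = ∑ k ∈ range (n + 1), coeff (R := ℚ) k (exp ℚ) * coeff (R := ℚ) p (L ^ k) * coeff (R := ℚ) (n - p) dL := by
      intro p hp
      simp only [mem_range] at hp
      rw [coeff_pSubst, Finset.sum_mul]
      refine Finset.sum_subset (range_subset_range.mpr (by omega)) ?_
      intro k hk hk'
      simp only [mem_range, not_lt] at hk hk'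
      have hpk : p < k := by omega
      rw [coeff_pow_eq_zero' (by rw [hLdef]; exact L_const0) hpk]
      ring
    rw [Finset.sum_congr rfl hext, Finset.sum_comm]
    refine Finset.sum_congr rfl fun k _ => ?_
    rw [PowerSeries.coeff_mul, Finset.Nat.sum_antidiagonal_eq_sum_range_succ_mk, Finset.mul_sum]
    exact Finset.sum_congr rfl fun p _ => by ring
  calc coeff (R := ℚ) n (PowerSeries.derivative ℚ (pSubst L (exp ℚ)))
      = coeff (R := ℚ) (n + 1) (pSubst L (exp ℚ)) * ((n : ℚ) + 1) := by
        rw [PowerSeries.coeff_derivative]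
    _ = ∑ k ∈ range (n + 2), coeff (R := ℚ) k (exp ℚ) * (coeff (R := ℚ) (n + 1) (L ^ k) * ((n : ℚ) + 1)) := by
        rw [coeff_pSubst, Finset.sum_mul]
        exact Finset.sum_congr rfl fun k _ => by ring
    _ = ∑ k ∈ range (n + 2), coeff (R := ℚ) k (exp ℚ) * ((k : ℚ) * coeff (R := ℚ) n (L ^ (k - 1) * dL)) := by
        exact Finset.sum_congr rfl fun k _ => by rw [key k]
    _ = ∑ j ∈ range (n + 1), coeff (R := ℚ) (j + 1) (exp ℚ)
          * (((j : ℚ) + 1) * coeff (R := ℚ) n (L ^ j * dL)) := by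
        rw [Finset.sum_range_succ']
        simp only [Nat.cast_zero, zero_mul, mul_zero, add_zero, Nat.add_sub_cancel]
        refine Finset.sum_congr rfl fun j _ => ?_
        push_cast
        ring_nf
    _ = ∑ j ∈ range (n + 1), coeff (R := ℚ) j (exp ℚ) * coeff (R := ℚ) n (L ^ j * dL) := by
        refine Finset.sum_congr rfl fun j _ => ?_
        rw [coeff_exp', coeff_exp', Nat.factorial_succ]
        have h1 : (j.factorial : ℚ) ≠ 0 := Nat.cast_ne_zero.mpr j.factorial_ne_zero
        have h2 : ((j : ℚ) + 1) ≠ 0 := by positivity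
        push_cast
        field_simp
    _ = coeff (R := ℚ) n (pSubst L (exp ℚ) * dL) := hRHS.symm

lemma pSubst_exp_eq : pSubst logOnePlusX (exp ℚ) = 1 + X := by
  have h0 : constantCoeff (R := ℚ) (pSubst logOnePlusX (exp ℚ)) = 1 := by
    rw [← coeff_zero_eq_constantCoeff_apply, coeff_pSubst]
    simp [coeff_exp']
  refine ode_sol h0 ?_
  rw [deriv_pSubst_exp, ← mul_assoc, mul_comm (1 + X) (pSubst logOnePlusX (exp ℚ)),
    mul_assoc, one_add_X_mul_dL, mul_one]

end ExpL

section Bern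

lemma rescale_X_eq (c : ℚ) : rescale c (X : PowerSeries ℚ) = c • X := by
  ext n
  rw [coeff_rescale, map_smul, smul_eq_mul, PowerSeries.coeff_X]
  by_cases h : n = 1
  · subst h; simp [pow_one, PowerSeries.coeff_X]
  · simp [PowerSeries.coeff_X, h]

lemma coeff_bernoulliPS (k : ℕ) :
    coeff (R := ℚ) k (bernoulliPowerSeries ℚ) = bernoulli k / k.factorial := by
  simp [bernoulliPowerSeries, coeff_mk]

lemma bern_key (ℓ : ℕ) :
    pSubst logOnePlusX (rescale (ℓ : ℚ) (bernoulliPowerSeries ℚ)) * ((1 + X) ^ ℓ - 1)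
      = (ℓ : ℚ) • logOnePlusX := by
  have hres := congrArg (rescale (ℓ : ℚ)) (bernoulliPowerSeries_mul_exp_sub_one ℚ)
  rw [map_mul, map_sub, map_one, rescale_X_eq, ← exp_pow_eq_rescale_exp] at hres
  have h2 := congrArg (pSubst logOnePlusX) hres
  rw [pSubst_mul L_const0, pSubst_sub, pSubst_one, pSubst_smul, pSubst_X L_const0,
    pSubst_pow L_const0, pSubst_exp_eq] at h2
  exact h2

lemma coeff_bernSum_eq (ℓ : ℕ) (hℓ : 1 ≤ ℓ) :
    ((ℓ : ℕ) : PowerSeries ℚ) * PowerSeries.coeff (R := (PowerSeries ℚ)) ℓ bernSum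
        * ((1 + X) ^ ℓ - 1) = logOnePlusX := by
  have hz : ((ℓ : ℚ)) ≠ 0 := Nat.cast_ne_zero.mpr (by omega)
  have hmain : PowerSeries.coeff (R := (PowerSeries ℚ)) ℓ bernSum
      = ((ℓ : ℚ)⁻¹ * (ℓ : ℚ)⁻¹) • pSubst logOnePlusX (rescale (ℓ : ℚ) (bernoulliPowerSeries ℚ)) := by
    ext i
    rw [bernSum, coeff_mk, coeff_mk]
    have hterm : ∀ k : ℕ, coeff (R := ℚ) i (PowerSeries.coeff (R := (PowerSeries ℚ)) ℓ (bernTerm k))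
        = (bernoulli k / k.factorial * liCoeff (2 - (k : ℤ)) ℓ) * coeff (R := ℚ) i (logOnePlusX ^ k) := by
      intro k
      rw [bernTerm, coeff_mk, map_smul, smul_eq_mul]
    have hsupp : (Function.support fun k : ℕ =>
        coeff (R := ℚ) i (PowerSeries.coeff (R := (PowerSeries ℚ)) ℓ (bernTerm k)))
          ⊆ (range (i + 1) : Finset ℕ) := by
      intro k hk
      simp only [Function.mem_support] at hk
      by_contra hk'
      simp only [Finset.coe_range, Set.mem_Iio, not_lt] at hk'
      have hik : i < k := by omega
      apply hk
      rw [hterm k, coeff_pow_eq_zero' L_const0 hik, mul_zero]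
    rw [finsum_eq_sum_of_support_subset _ hsupp, map_smul, smul_eq_mul, coeff_pSubst,
      Finset.mul_sum]
    refine Finset.sum_congr rfl fun k _ => ?_
    rw [hterm k, coeff_rescale, coeff_bernoulliPS]
    have hli : liCoeff (2 - (k : ℤ)) ℓ = (ℓ : ℚ) ^ ((k : ℤ) - 2) := by
      rw [liCoeff, if_neg (by omega : ℓ ≠ 0), neg_sub]
    have hzp : (ℓ : ℚ) ^ ((k : ℤ) - 2) = (ℓ : ℚ) ^ k * ((ℓ : ℚ)⁻¹ * (ℓ : ℚ)⁻¹) := by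
      rw [sub_eq_add_neg, zpow_add₀ hz, zpow_natCast]
      congr 1
      rw [show (-2 : ℤ) = -1 + -1 by norm_num, zpow_add₀ hz, zpow_neg_one]
    rw [hli, hzp]
    ring
  rw [hmain]
  have hW := bern_key ℓ
  set W := pSubst logOnePlusX (rescale (ℓ : ℚ) (bernoulliPowerSeries ℚ)) with hWdef
  have hC : ((ℓ : ℕ) : PowerSeries ℚ) = PowerSeries.C (R := ℚ) ((ℓ : ℕ) : ℚ) := by
    rw [map_natCast]
  rw [hC, smul_eq_C_mul, map_mul] at *
  have hinv : PowerSeries.C (R := ℚ) ((ℓ : ℚ)) * PowerSeries.C (R := ℚ) ((ℓ : ℚ)⁻¹) = 1 := by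
    rw [← map_mul, mul_inv_cancel₀ hz, map_one]
  set Cl := PowerSeries.C (R := ℚ) ((ℓ : ℚ)) with hCl
  set Cli := PowerSeries.C (R := ℚ) ((ℓ : ℚ)⁻¹) with hCli
  set P := ((1 + X : PowerSeries ℚ) ^ ℓ - 1) with hP
  -- goal : Cl * (Cli * Cli * W) * P = logOnePlusX ; hW : W * P = Cl * logOnePlusX
  linear_combination (Cl * Cli * Cli) * hW + (logOnePlusX * (Cl * Cli + 1)) * hinv

end Bern

section Plog

variable {K : Type*} [Field K] [CharZero K]

lemma coeff_zero_plog (F : PowerSeries K) : coeff (R := K) 0 (plog F) = 0 := by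
  rw [plog, coeff_mk]
  simp

lemma constantCoeff_plog (F : PowerSeries K) : constantCoeff (R := K) (plog F) = 0 := by
  rw [← coeff_zero_eq_constantCoeff_apply]; exact coeff_zero_plog F

lemma coeff_plog_eq (F : PowerSeries K) {b N : ℕ} (hbN : b ≤ N)
    (h1 : constantCoeff (R := K) F = 1) :
    coeff (R := K) b (plog F)
      = coeff (R := K) b (∑ k ∈ Finset.Icc 1 N, ((-1 : K) ^ (k + 1) / k) • (F - 1) ^ k) := by
  rw [plog, coeff_mk, map_sum]
  rw [show ∑ k ∈ Finset.Icc 1 N, coeff (R := K) b (((-1 : K) ^ (k + 1) / k) • (F - 1) ^ k)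
      = ∑ k ∈ Finset.Icc 1 N, ((-1 : K) ^ (k + 1) / k) * coeff (R := K) b ((F - 1) ^ k) from
    Finset.sum_congr rfl fun k _ => by rw [map_smul, smul_eq_mul]]
  refine Finset.sum_subset (Finset.Icc_subset_Icc_right hbN) fun k hk hk' => ?_
  have hbk : b < k := by
    simp only [Finset.mem_Icc] at hk hk'
    omega
  have hu : constantCoeff (R := K) (F - 1) = 0 := by rw [map_sub, h1, map_one, sub_self]
  rw [coeff_pow_eq_zero' hu hbk, mul_zero]

lemma mul_deriv_plog (F : PowerSeries K) (h1 : constantCoeff (R := K) F = 1) :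
    F * PowerSeries.derivative K (plog F) = PowerSeries.derivative K F := by
  have hu : constantCoeff (R := K) (F - 1) = 0 := by rw [map_sub, h1, map_one, sub_self]
  ext n
  set SN : PowerSeries K :=
    ∑ k ∈ Finset.Icc 1 (n + 1), ((-1 : K) ^ (k + 1) / k) • (F - 1) ^ k with hSN
  have h2 : coeff (R := K) n (F * PowerSeries.derivative K (plog F))
      = coeff (R := K) n (F * PowerSeries.derivative K SN) := by
    rw [PowerSeries.coeff_mul, PowerSeries.coeff_mul]
    refine Finset.sum_congr rfl fun pr hpr => ?_
    have hsum := Finset.HasAntidiagonal.mem_antidiagonal.mp hpr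
    rw [PowerSeries.coeff_derivative, PowerSeries.coeff_derivative,
      coeff_plog_eq F (show pr.2 + 1 ≤ n + 1 by omega) h1]
  rw [h2]
  have hdu : PowerSeries.derivative K (F - 1) = PowerSeries.derivative K F := by
    rw [map_sub, Derivation.map_one_eq_zero, sub_zero]
  have hDSN : PowerSeries.derivative K SN
      = (∑ j ∈ range (n + 1), (-(F - 1)) ^ j) * PowerSeries.derivative K F := by
    rw [hSN, map_sum]
    have hterm : ∀ k ∈ Finset.Icc 1 (n + 1),
        PowerSeries.derivative K (((-1 : K) ^ (k + 1) / k) • (F - 1) ^ k)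
          = (-1 : K) ^ (k + 1) • ((F - 1) ^ (k - 1) * PowerSeries.derivative K F) := by
      intro k hk
      have hk1 : 1 ≤ k := (Finset.mem_Icc.mp hk).1
      have hkK : (k : K) ≠ 0 := Nat.cast_ne_zero.mpr (by omega)
      rw [Derivation.map_smul, Derivation.leibniz_pow, smul_eq_mul, hdu,
        ← Nat.cast_smul_eq_nsmul K, smul_smul, div_mul_cancel₀ _ hkK]
    rw [Finset.sum_congr rfl hterm, show Finset.Icc 1 (n + 1) = Finset.Ico 1 (n + 2) from
      (Finset.Ico_add_one_right_eq_Icc 1 (n + 1)).symm, Finset.sum_Ico_eq_sum_range]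
    rw [Finset.sum_mul]
    refine Finset.sum_congr rfl fun j _ => ?_
    rw [show 1 + j + 1 = j + 2 by omega, show 1 + j - 1 = j by omega]
    rw [smul_eq_C_mul, map_pow, map_neg, map_one, neg_pow]
    have hpow : (-1 : PowerSeries K) ^ (j + 2) = (-1) ^ j := by rw [pow_add]; norm_num
    rw [hpow]
    have hmp : ((-1 : PowerSeries K)) ^ j * (F - 1) ^ j = (-(F - 1)) ^ j := by
      rw [← mul_pow, neg_one_mul]
    linear_combination (PowerSeries.derivative K F) * hmp
  rw [hDSN, ← mul_assoc]
  have hFgeom : F * (∑ j ∈ range (n + 1), (-(F - 1)) ^ j) = 1 - (-(F - 1)) ^ (n + 1) := by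
    have hgeom := geom_sum_mul (-(F - 1)) (n + 1)
    have hne : -(F - 1) - 1 = -F := by ring
    rw [hne] at hgeom
    linear_combination -hgeom
  rw [hFgeom, sub_mul, one_mul, map_sub]
  have hzero : coeff (R := K) n ((-(F - 1)) ^ (n + 1) * PowerSeries.derivative K F) = 0 := by
    rw [PowerSeries.coeff_mul]
    refine Finset.sum_eq_zero fun pr hpr => ?_
    have hsum := Finset.HasAntidiagonal.mem_antidiagonal.mp hpr
    have hun : constantCoeff (R := K) (-(F - 1)) = 0 := by rw [map_neg, hu, neg_zero]
    rw [coeff_pow_eq_zero' hun (show pr.1 < n + 1 by omega), zero_mul]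
  rw [hzero, sub_zero]

lemma plog_mul {F G : PowerSeries K} (hF : constantCoeff (R := K) F = 1)
    (hG : constantCoeff (R := K) G = 1) : plog (F * G) = plog F + plog G := by
  have hFG : constantCoeff (R := K) (F * G) = 1 := by rw [map_mul, hF, hG, one_mul]
  refine PowerSeries.derivative.ext ?_ ?_
  · have hne : F * G ≠ 0 := by
      intro h
      rw [h, map_zero] at hFG
      exact zero_ne_one hFG
    apply mul_left_cancel₀ hne
    rw [mul_deriv_plog _ hFG, map_add, Derivation.leibniz, smul_eq_mul, smul_eq_mul]
    have h1 := mul_deriv_plog F hF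
    have h2 := mul_deriv_plog G hG
    linear_combination (-F) * h2 + (-G) * h1
  · rw [constantCoeff_plog, map_add, constantCoeff_plog, constantCoeff_plog, add_zero]

lemma coeff_plog_rescale (c : K) (F : PowerSeries K) (b : ℕ) :
    coeff (R := K) b (plog (rescale c F)) = c ^ b * coeff (R := K) b (plog F) := by
  rw [plog, plog, coeff_mk, coeff_mk, Finset.mul_sum]
  refine Finset.sum_congr rfl fun k _ => ?_
  have h : rescale c F - 1 = rescale c (F - 1) := by rw [map_sub, map_one]
  rw [h, ← map_pow, coeff_rescale]
  ring

lemma coeff_plog_one_sub_X {b : ℕ} (hb : 1 ≤ b) :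
    coeff (R := K) b (plog (1 - X : PowerSeries K)) = -((b : K)⁻¹) := by
  have hbK : ((b : K)) ≠ 0 := Nat.cast_ne_zero.mpr (by omega)
  rw [plog, coeff_mk]
  have h : (1 - X : PowerSeries K) - 1 = (-1 : K) • X := by
    rw [neg_smul, one_smul]
    ring
  rw [Finset.sum_eq_single b]
  · rw [h, smul_pow, map_smul, smul_eq_mul, PowerSeries.coeff_X_pow, if_pos rfl, mul_one]
    have hsign : (-1 : K) ^ (b + 1) * (-1 : K) ^ b = -1 := by
      rw [← pow_add]
      exact Odd.neg_one_pow ⟨b, by omega⟩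
    rw [div_mul_eq_mul_div, hsign, neg_div, one_div]
  · intro k _ hk
    rw [h, smul_pow, map_smul, smul_eq_mul, PowerSeries.coeff_X_pow,
      if_neg (fun hh => hk hh.symm), mul_zero, mul_zero]
  · intro hb'
    exact absurd (Finset.mem_Icc.mpr ⟨hb, le_refl b⟩) hb'

end Plog

instance : CharZero (LaurentSeries ℚ) where
  cast_injective a b h := by
    have h2 : ((a : PowerSeries ℚ)) = (b : PowerSeries ℚ) :=
      HahnSeries.ofPowerSeries_injective (Γ := ℤ) (R := ℚ) (by
        rw [map_natCast, map_natCast]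
        exact_mod_cast h)
    have h3 := congrArg (constantCoeff (R := ℚ)) h2
    rw [map_natCast, map_natCast] at h3
    exact_mod_cast h3



theorem statement1 (F : PowerSeries (LaurentSeries ℚ))
    (h0 : PowerSeries.constantCoeff (R := (LaurentSeries ℚ)) F = 1)
    (hfe : F = (1 - PowerSeries.X) * PowerSeries.rescale (1 + xL) F) :
    PowerSeries.C (R := (LaurentSeries ℚ)) ((HahnSeries.ofPowerSeries ℤ ℚ) logOnePlusX) * plog F
      = PowerSeries.map (HahnSeries.ofPowerSeries ℤ ℚ) bernSum := by
  classical
  have hres0 : constantCoeff (R := (LaurentSeries ℚ)) (rescale (1 + xL) F) = 1 := by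
    rw [← coeff_zero_eq_constantCoeff_apply, coeff_rescale, pow_zero, one_mul,
      coeff_zero_eq_constantCoeff_apply, h0]
  have h1X : constantCoeff (R := (LaurentSeries ℚ)) (1 - X) = 1 := by
    rw [map_sub, map_one, constantCoeff_X, sub_zero]
  have hplog : plog F = plog (1 - X) + plog (rescale (1 + xL) F) := by
    conv_lhs => rw [hfe]
    exact plog_mul h1X hres0
  refine PowerSeries.ext fun ℓ => ?_
  rw [PowerSeries.coeff_C_mul, PowerSeries.coeff_map]
  rcases Nat.eq_zero_or_pos ℓ with hℓ | hℓ
  · subst hℓ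
    rw [coeff_zero_plog, mul_zero]
    have hz : PowerSeries.coeff (R := (PowerSeries ℚ)) 0 bernSum = 0 := by
      rw [bernSum, coeff_mk]
      ext i
      rw [coeff_mk]
      have hk0 : ∀ k : ℕ, coeff (R := ℚ) i (PowerSeries.coeff (R := (PowerSeries ℚ)) 0 (bernTerm k)) = 0 := by
        intro k
        rw [bernTerm, coeff_mk]
        simp [liCoeff]
      simp only [hk0, finsum_zero, map_zero]
    rw [hz, map_zero]
  · set σ := HahnSeries.ofPowerSeries ℤ ℚ with hσ
    have hqσ : σ (1 + X : PowerSeries ℚ) = 1 + xL := by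
      rw [map_add, map_one, hσ, HahnSeries.ofPowerSeries_X, xL]
    have hc : coeff (R := (LaurentSeries ℚ)) ℓ (plog F)
        = -(((ℓ : LaurentSeries ℚ))⁻¹) + (1 + xL) ^ ℓ * coeff (R := (LaurentSeries ℚ)) ℓ (plog F) := by
      conv_lhs => rw [hplog]
      rw [map_add, coeff_plog_one_sub_X hℓ, coeff_plog_rescale]
    have hℓK : ((ℓ : LaurentSeries ℚ)) ≠ 0 := Nat.cast_ne_zero.mpr (by omega)
    have hinv : (ℓ : LaurentSeries ℚ) * ((ℓ : LaurentSeries ℚ))⁻¹ = 1 := mul_inv_cancel₀ hℓK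
    have hM : coeff (R := (LaurentSeries ℚ)) ℓ (plog F)
        * ((ℓ : LaurentSeries ℚ) * ((1 + xL) ^ ℓ - 1)) = 1 := by
      linear_combination (-((ℓ : LaurentSeries ℚ))) * hc + hinv
    have hBq := coeff_bernSum_eq ℓ hℓ
    have hBK : (ℓ : LaurentSeries ℚ) * σ (PowerSeries.coeff (R := (PowerSeries ℚ)) ℓ bernSum)
        * ((1 + xL) ^ ℓ - 1) = σ logOnePlusX := by
      have hm := congrArg σ hBq
      rw [map_mul, map_mul, map_sub, map_one, map_pow, hqσ, map_natCast] at hm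
      exact hm
    calc σ logOnePlusX * coeff (R := (LaurentSeries ℚ)) ℓ (plog F)
        = ((ℓ : LaurentSeries ℚ) * σ (PowerSeries.coeff (R := (PowerSeries ℚ)) ℓ bernSum)
            * ((1 + xL) ^ ℓ - 1)) * coeff (R := (LaurentSeries ℚ)) ℓ (plog F) := by rw [hBK]
      _ = σ (PowerSeries.coeff (R := (PowerSeries ℚ)) ℓ bernSum)
            * (coeff (R := (LaurentSeries ℚ)) ℓ (plog F)
              * ((ℓ : LaurentSeries ℚ) * ((1 + xL) ^ ℓ - 1))) := by ring
      _ = σ (PowerSeries.coeff (R := (PowerSeries ℚ)) ℓ bernSum) * 1 := by rw [hM]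
      _ = σ (PowerSeries.coeff (R := (PowerSeries ℚ)) ℓ bernSum) := mul_one _
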